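/- Let p ≡ 3 (mod 8) be an odd prime with p ≠ 3, and let β ∈ {2, 2^{−1}}, where 2^{−1} is the multiplicative inverse of 2 modulo p. Then the set S_β = {{x, βx} : x ∈ QR(p)} is a strong Skolem starter for ℤ_p. -/
import Mathlib


/-- The sum of the two entries of an unordered pair. -/
def pairSum {n : ℕ} : Sym2 (ZMod n) → ZMod n :=
  Sym2.lift ⟨fun x y => x + y, fun x y => add_comm x y⟩

/-- `S` is a starter for `ℤ_n`: a set of unordered pairs of distinct nonzero
elements such that every nonzero element lies in exactly one pair, and for every
nonzero `a` there is exactly one pair whose (signed) difference is `a`. -/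
def IsStarter (n : ℕ) (S : Set (Sym2 (ZMod n))) : Prop :=
  (∀ z ∈ S, ¬ z.IsDiag) ∧
  (∀ z ∈ S, (0 : ZMod n) ∉ z) ∧
  (∀ a : ZMod n, a ≠ 0 → ∃! z, z ∈ S ∧ a ∈ z) ∧
  (∀ a : ZMod n, a ≠ 0 → ∃! z, z ∈ S ∧ ∃ x y : ZMod n, z = s(x, y) ∧ x - y = a)

/-- A starter is strong if the pair sums are nonzero and pairwise distinct. -/
def IsStrongStarter (n : ℕ) (S : Set (Sym2 (ZMod n))) : Prop :=
  IsStarter n S ∧ (∀ z ∈ S, pairSum z ≠ 0) ∧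
    ∀ z ∈ S, ∀ w ∈ S, pairSum z = pairSum w → z = w

/-- A starter is Skolem if, identifying `ℤ_n ∖ {0}` with `1, …, n-1` via `ZMod.val`,
for every `i = 1, …, (n-1)/2` some pair `{x, y}` with `y > x` satisfies `y - x ≡ i (mod n)`. -/
def IsSkolemStarter (n : ℕ) (S : Set (Sym2 (ZMod n))) : Prop :=
  IsStarter n S ∧ ∀ i : ℕ, 1 ≤ i → i ≤ (n - 1) / 2 →
    ∃ z ∈ S, ∃ x y : ZMod n, z = s(x, y) ∧ x.val < y.val ∧ y - x = (i : ZMod n)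

/-- A strong Skolem starter is a starter that is both strong and Skolem. -/
def IsStrongSkolemStarter (n : ℕ) (S : Set (Sym2 (ZMod n))) : Prop :=
  IsStrongStarter n S ∧ IsSkolemStarter n S

section Aux

variable {p : ℕ} [Fact p.Prime]

lemma sq_inv_iff (a : ZMod p) : IsSquare a⁻¹ ↔ IsSquare a := by
  constructor
  · rintro ⟨r, hr⟩
    exact ⟨r⁻¹, by rw [← mul_inv, ← hr, inv_inv]⟩
  · rintro ⟨r, hr⟩
    exact ⟨r⁻¹, by rw [hr, mul_inv]⟩

lemma nsq_mul_nsq (hp2 : p ≠ 2) {a b : ZMod p} (ha : a ≠ 0) (hb : b ≠ 0)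
    (ha' : ¬ IsSquare a) (hb' : ¬ IsSquare b) : IsSquare (a * b) := by
  have h1 := quadraticChar_neg_one_iff_not_isSquare.mpr ha'
  have h2 := quadraticChar_neg_one_iff_not_isSquare.mpr hb'
  have hm : quadraticChar (ZMod p) (a * b) = 1 := by
    rw [map_mul, h1, h2]; ring
  exact (quadraticChar_one_iff_isSquare (mul_ne_zero ha hb)).mp hm

lemma sq_mul_nsq (hp2 : p ≠ 2) {a b : ZMod p} (ha : a ≠ 0) (hb : b ≠ 0)
    (ha' : IsSquare a) (hb' : ¬ IsSquare b) : ¬ IsSquare (a * b) := by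
  have h1 := (quadraticChar_one_iff_isSquare ha).mpr ha'
  have h2 := quadraticChar_neg_one_iff_not_isSquare.mpr hb'
  rw [← quadraticChar_neg_one_iff_not_isSquare, map_mul, h1, h2]; ring

end Aux

/-- Theorem 2.2: for a prime `p ≡ 3 (mod 8)`, `p ≠ 3`, and `β ∈ {2, 2⁻¹}`,
the set `S_β = {{x, βx} : x ∈ QR(p)}` is a strong Skolem starter for `ℤ_p`. -/
theorem strong_skolem_starter_two (p : ℕ) (hp : p.Prime) (h8 : p % 8 = 3) (hp3 : p ≠ 3)
    (β : ZMod p) (hβ : β = 2 ∨ β = (2 : ZMod p)⁻¹) :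
    IsStrongSkolemStarter p {z | ∃ x : ZMod p, x ≠ 0 ∧ IsSquare x ∧ z = s(x, β * x)} := by
  haveI : Fact p.Prime := ⟨hp⟩
  set S : Set (Sym2 (ZMod p)) :=
    {z | ∃ x : ZMod p, x ≠ 0 ∧ IsSquare x ∧ z = s(x, β * x)} with hS
  have hp2 : p ≠ 2 := by omega
  have h2ne : (2 : ZMod p) ≠ 0 := by
    have : ((2 : ℕ) : ZMod p) ≠ 0 := by
      rw [Ne, ZMod.natCast_eq_zero_iff]
      intro h
      exact hp2 ((Nat.prime_dvd_prime_iff_eq hp Nat.prime_two).mp h)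
    simpa using this
  have h2i : (2 : ZMod p) * (2 : ZMod p)⁻¹ = 1 := mul_inv_cancel₀ h2ne
  have h3ne : (3 : ZMod p) ≠ 0 := by
    have : ((3 : ℕ) : ZMod p) ≠ 0 := by
      rw [Ne, ZMod.natCast_eq_zero_iff]
      intro h
      exact hp3 ((Nat.prime_dvd_prime_iff_eq hp Nat.prime_three).mp h)
    simpa using this
  have hns2 : ¬ IsSquare (2 : ZMod p) := by
    rw [ZMod.exists_sq_eq_two_iff hp2]; omega
  have hnsneg1 : ¬ IsSquare (-1 : ZMod p) := by
    rw [ZMod.exists_sq_eq_neg_one_iff]; omega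
  have hneg1ne : (-1 : ZMod p) ≠ 0 := neg_ne_zero.mpr one_ne_zero
  have hβ0 : β ≠ 0 := by
    rcases hβ with h | h <;> rw [h]
    · exact h2ne
    · exact inv_ne_zero h2ne
  have hβns : ¬ IsSquare β := by
    rcases hβ with h | h <;> rw [h]
    · exact hns2
    · rw [sq_inv_iff]; exact hns2
  have hβ1 : β - 1 ≠ 0 := by
    rcases hβ with h | h <;> rw [h] <;> intro hc
    · have h1 : (1 : ZMod p) = 0 := by linear_combination hc
      exact one_ne_zero h1
    · have h1 : (1 : ZMod p) = 0 := by linear_combination h2i - 2 * hc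
      exact one_ne_zero h1
  have h1mβ : (1 : ZMod p) - β ≠ 0 := by
    intro hc; apply hβ1; linear_combination -hc
  have hβp1 : (1 : ZMod p) + β ≠ 0 := by
    rcases hβ with h | h <;> rw [h] <;> intro hc
    · exact h3ne (by linear_combination hc)
    · exact h3ne (by linear_combination 2 * hc - h2i)
  have hsqβm1 : IsSquare (β - 1) := by
    rcases hβ with h | h <;> rw [h]
    · exact ⟨1, by ring⟩
    · have he : (2 : ZMod p)⁻¹ - 1 = (-1) * (2 : ZMod p)⁻¹ := by linear_combination h2i
      rw [he]
      exact nsq_mul_nsq hp2 hneg1ne (inv_ne_zero h2ne) hnsneg1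
        (fun hh => hns2 ((sq_inv_iff _).mp hh))
  have hnsq1mβ : ¬ IsSquare ((1 : ZMod p) - β) := by
    rcases hβ with h | h <;> rw [h]
    · have he : (1 : ZMod p) - 2 = -1 := by ring
      rw [he]; exact hnsneg1
    · have he : (1 : ZMod p) - (2 : ZMod p)⁻¹ = (2 : ZMod p)⁻¹ := by linear_combination -h2i
      rw [he]; exact fun hh => hns2 ((sq_inv_iff _).mp hh)
  -- helper: for x nonzero square, β*x is not a square
  have hβx_ns : ∀ {x : ZMod p}, x ≠ 0 → IsSquare x → ¬ IsSquare (β * x) := by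
    intro x hx0 hxs
    rw [mul_comm]
    exact sq_mul_nsq hp2 hx0 hβ0 hxs hβns
  have hstart : IsStarter p S := by
    refine ⟨?_, ?_, ?_, ?_⟩
    · rintro z ⟨x, hx0, hxs, rfl⟩
      rw [Sym2.mk_isDiag_iff]
      intro h
      have hm : (β - 1) * x = 0 := by linear_combination -h
      rcases mul_eq_zero.mp hm with h' | h'
      · exact hβ1 h'
      · exact hx0 h'
    · rintro z ⟨x, hx0, hxs, rfl⟩ hm
      rw [Sym2.mem_iff] at hm
      rcases hm with h | h
      · exact hx0 h.symm
      · exact (mul_ne_zero hβ0 hx0) h.symm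
    · intro a ha
      by_cases hs : IsSquare a
      · refine ⟨s(a, β * a), ⟨⟨a, ha, hs, rfl⟩, by simp⟩, ?_⟩
        rintro z ⟨⟨x, hx0, hxs, rfl⟩, hm⟩
        rw [Sym2.mem_iff] at hm
        rcases hm with h | h
        · rw [h]
        · exact absurd (h ▸ hs) (hβx_ns hx0 hxs)
      · have hbi0 : (β⁻¹ : ZMod p) ≠ 0 := inv_ne_zero hβ0
        have hbins : ¬ IsSquare (β⁻¹ : ZMod p) := fun hh => hβns ((sq_inv_iff _).mp hh)
        have hx0 : β⁻¹ * a ≠ 0 := mul_ne_zero hbi0 ha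
        have hxs : IsSquare (β⁻¹ * a) := nsq_mul_nsq hp2 hbi0 ha hbins hs
        have key : β * (β⁻¹ * a) = a := by
          rw [← mul_assoc, mul_inv_cancel₀ hβ0, one_mul]
        refine ⟨s(β⁻¹ * a, a), ⟨⟨β⁻¹ * a, hx0, hxs, by rw [key]⟩, by simp⟩, ?_⟩
        rintro z ⟨⟨x, hx0', hxs', rfl⟩, hm⟩
        rw [Sym2.mem_iff] at hm
        rcases hm with h | h
        · exact absurd (h ▸ hxs') hs
        · have hx : x = β⁻¹ * a := by
            rw [h, ← mul_assoc, inv_mul_cancel₀ hβ0, one_mul]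
          rw [hx, key]
    · intro a ha
      by_cases hs : IsSquare a
      · -- a = (β-1)*x₀ with x₀ = (β-1)⁻¹ * a, pair displayed (β x₀, x₀)
        have hm10 : (β - 1)⁻¹ ≠ 0 := inv_ne_zero hβ1
        have hx0 : (β - 1)⁻¹ * a ≠ 0 := mul_ne_zero hm10 ha
        have hxs : IsSquare ((β - 1)⁻¹ * a) := ((sq_inv_iff _).mpr hsqβm1).mul hs
        have key : (β - 1) * ((β - 1)⁻¹ * a) = a := by
          rw [← mul_assoc, mul_inv_cancel₀ hβ1, one_mul]
        refine ⟨s((β - 1)⁻¹ * a, β * ((β - 1)⁻¹ * a)),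
          ⟨⟨(β - 1)⁻¹ * a, hx0, hxs, rfl⟩,
            β * ((β - 1)⁻¹ * a), (β - 1)⁻¹ * a, Sym2.eq_swap, by linear_combination key⟩, ?_⟩
        rintro z ⟨⟨x, hx0', hxs', rfl⟩, u, v, huv, hd⟩
        rw [Sym2.eq_iff] at huv
        rcases huv with ⟨hu, hv⟩ | ⟨hu, hv⟩
        · -- a = x - βx = (1-β)x, nonsquare: contradiction
          exfalso
          have : a = x * ((1 : ZMod p) - β) := by
            rw [← hd, ← hu, ← hv]; ring
          exact sq_mul_nsq hp2 hx0' h1mβ hxs' hnsq1mβ (this ▸ hs)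
        · have hax : (β - 1) * x = a := by rw [← hd, ← hu, ← hv]; ring
          have hx : x = (β - 1)⁻¹ * a := by
            rw [← hax, ← mul_assoc, inv_mul_cancel₀ hβ1, one_mul]
          rw [hx]
      · have hm10 : ((1 : ZMod p) - β)⁻¹ ≠ 0 := inv_ne_zero h1mβ
        have hns1mβi : ¬ IsSquare ((1 : ZMod p) - β)⁻¹ := fun hh => hnsq1mβ ((sq_inv_iff _).mp hh)
        have hx0 : ((1 : ZMod p) - β)⁻¹ * a ≠ 0 := mul_ne_zero hm10 ha
        have hxs : IsSquare (((1 : ZMod p) - β)⁻¹ * a) := nsq_mul_nsq hp2 hm10 ha hns1mβi hs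
        have key : ((1 : ZMod p) - β) * (((1 : ZMod p) - β)⁻¹ * a) = a := by
          rw [← mul_assoc, mul_inv_cancel₀ h1mβ, one_mul]
        refine ⟨s(((1 : ZMod p) - β)⁻¹ * a, β * (((1 : ZMod p) - β)⁻¹ * a)),
          ⟨⟨((1 : ZMod p) - β)⁻¹ * a, hx0, hxs, rfl⟩,
            ((1 : ZMod p) - β)⁻¹ * a, β * (((1 : ZMod p) - β)⁻¹ * a), rfl,
            by linear_combination key⟩, ?_⟩
        rintro z ⟨⟨x, hx0', hxs', rfl⟩, u, v, huv, hd⟩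
        rw [Sym2.eq_iff] at huv
        rcases huv with ⟨hu, hv⟩ | ⟨hu, hv⟩
        · have hax : ((1 : ZMod p) - β) * x = a := by rw [← hd, ← hu, ← hv]; ring
          have hx : x = ((1 : ZMod p) - β)⁻¹ * a := by
            rw [← hax, ← mul_assoc, inv_mul_cancel₀ h1mβ, one_mul]
          rw [hx]
        · exfalso
          have : a = x * (β - 1) := by
            rw [← hd, ← hu, ← hv]; ring
          have hsq' : IsSquare (x * (β - 1)) := hxs'.mul hsqβm1
          exact hs (this ▸ hsq')
  have hsum : ∀ x : ZMod p, pairSum s(x, β * x) = (1 + β) * x := by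
    intro x
    show (Sym2.lift _) s(x, β * x) = _
    rw [Sym2.lift_mk]
    ring
  have hstrong : IsStrongStarter p S := by
    refine ⟨hstart, ?_, ?_⟩
    · rintro z ⟨x, hx0, hxs, rfl⟩
      rw [hsum]
      exact mul_ne_zero hβp1 hx0
    · rintro z ⟨x, hx0, hxs, rfl⟩ w ⟨y, hy0, hys, rfl⟩ hpq
      rw [hsum, hsum] at hpq
      have : x = y := mul_left_cancel₀ hβp1 hpq
      rw [this]
  refine ⟨hstrong, hstart, ?_⟩
  -- Skolem property
  intro i hi1 hi2
  have hp5 : 5 ≤ p := by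
    rcases hp.eq_one_or_self_of_dvd 1 (one_dvd p) with h | h <;> omega
  have hilt : 2 * i < p := by omega
  have hi0 : 0 < i := hi1
  have hvi : ((i : ℕ) : ZMod p).val = i := ZMod.val_cast_of_lt (by omega)
  have hv2i : (((2 * i : ℕ)) : ZMod p).val = 2 * i := ZMod.val_cast_of_lt (by omega)
  have ha : ((i : ℕ) : ZMod p) ≠ 0 := by
    intro h
    rw [h, ZMod.val_zero] at hvi
    omega
  have h2cast : (((2 * i : ℕ)) : ZMod p) = 2 * ((i : ℕ) : ZMod p) := by push_cast; ring
  have ha2 : 2 * ((i : ℕ) : ZMod p) ≠ 0 := mul_ne_zero h2ne ha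
  have hnegval : ∀ k : ℕ, 0 < k → k < p → (-((k : ℕ) : ZMod p)).val = p - k := by
    intro k hk0 hkp
    have hc : (((p - k : ℕ)) : ZMod p) = -((k : ℕ) : ZMod p) := by
      push_cast [Nat.cast_sub hkp.le]
      rw [ZMod.natCast_self]
      ring
    rw [← hc]
    exact ZMod.val_cast_of_lt (by omega)
  have hvni : (-((i : ℕ) : ZMod p)).val = p - i := hnegval i hi0 (by omega)
  have hvn2i : (-(2 * ((i : ℕ) : ZMod p))).val = p - 2 * i := by
    rw [← h2cast]
    exact hnegval (2 * i) (by omega) hilt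
  have hsneg2 : IsSquare (-2 : ZMod p) := by
    have he : (-2 : ZMod p) = (-1) * 2 := by ring
    rw [he]
    exact nsq_mul_nsq hp2 hneg1ne h2ne hnsneg1 hns2
  rcases hβ with hb | hb <;> by_cases hs : IsSquare ((i : ℕ) : ZMod p)
  · -- β = 2, i square : pair (i, 2i)
    refine ⟨s(((i : ℕ) : ZMod p), β * ((i : ℕ) : ZMod p)),
      ⟨((i : ℕ) : ZMod p), ha, hs, rfl⟩,
      ((i : ℕ) : ZMod p), β * ((i : ℕ) : ZMod p), rfl, ?_, by rw [hb]; ring⟩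
    rw [hb, ← h2cast, hvi, hv2i]
    omega
  · -- β = 2, i nonsquare : x₀ = -i, pair displayed (-2i, -i)
    have hx0 : -((i : ℕ) : ZMod p) ≠ 0 := neg_ne_zero.mpr ha
    have hxs : IsSquare (-((i : ℕ) : ZMod p)) := by
      have he : -((i : ℕ) : ZMod p) = (-1) * ((i : ℕ) : ZMod p) := by ring
      rw [he]
      exact nsq_mul_nsq hp2 hneg1ne ha hnsneg1 hs
    refine ⟨s(-((i : ℕ) : ZMod p), β * -((i : ℕ) : ZMod p)),
      ⟨-((i : ℕ) : ZMod p), hx0, hxs, rfl⟩,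
      -(2 * ((i : ℕ) : ZMod p)), -((i : ℕ) : ZMod p), ?_, ?_, by ring⟩
    · rw [hb, show (2 : ZMod p) * -((i : ℕ) : ZMod p) = -(2 * ((i : ℕ) : ZMod p)) by ring]
      exact Sym2.eq_swap
    · rw [hvni, hvn2i]
      omega
  · -- β = 2⁻¹, i square : x₀ = -2i, pair displayed (-2i, -i)
    have hx0 : -(2 * ((i : ℕ) : ZMod p)) ≠ 0 := neg_ne_zero.mpr ha2
    have hxs : IsSquare (-(2 * ((i : ℕ) : ZMod p))) := by
      have he : -(2 * ((i : ℕ) : ZMod p)) = (-2) * ((i : ℕ) : ZMod p) := by ring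
      rw [he]
      exact hsneg2.mul hs
    have hβx : β * -(2 * ((i : ℕ) : ZMod p)) = -((i : ℕ) : ZMod p) := by
      rw [hb]
      linear_combination (-((i : ℕ) : ZMod p)) * h2i
    refine ⟨s(-(2 * ((i : ℕ) : ZMod p)), β * -(2 * ((i : ℕ) : ZMod p))),
      ⟨-(2 * ((i : ℕ) : ZMod p)), hx0, hxs, rfl⟩,
      -(2 * ((i : ℕ) : ZMod p)), -((i : ℕ) : ZMod p), by rw [hβx], ?_, by ring⟩
    rw [hvni, hvn2i]
    omega
  · -- β = 2⁻¹, i nonsquare : x₀ = 2i, pair displayed (i, 2i)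
    have hxs : IsSquare (2 * ((i : ℕ) : ZMod p)) := nsq_mul_nsq hp2 h2ne ha hns2 hs
    have hβx : β * (2 * ((i : ℕ) : ZMod p)) = ((i : ℕ) : ZMod p) := by
      rw [hb]
      linear_combination ((i : ℕ) : ZMod p) * h2i
    refine ⟨s(2 * ((i : ℕ) : ZMod p), β * (2 * ((i : ℕ) : ZMod p))),
      ⟨2 * ((i : ℕ) : ZMod p), ha2, hxs, rfl⟩,
      ((i : ℕ) : ZMod p), 2 * ((i : ℕ) : ZMod p), ?_, ?_, by ring⟩
    · rw [hβx]
      exact Sym2.eq_swap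
    · rw [← h2cast, hvi, hv2i]
      omega
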